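/- For all 0 < x < 1, 2\sqrt{H^{-1}(x)(1 - H^{-1}(x))} > x, where H is the binary entropy function and H^{-1} : [0,1] \to [0,1/2] is its inverse. -/

import Mathlib

lemma lnA (q : ℝ) (h0 : 0 < q) (h1 : q < 1) :
    -Real.log q ≤ (1 - q) / Real.sqrt q := by
  have hs : 0 < Real.sqrt q := Real.sqrt_pos.2 h0
  have hs1 : Real.sqrt q < 1 := by
    nlinarith [Real.sq_sqrt h0.le, hs]
  have hu : 0 < -Real.log (Real.sqrt q) := by
    have : Real.log (Real.sqrt q) < 0 := Real.log_neg hs hs1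
    linarith
  have hsinh := (Real.self_lt_sinh_iff (x := -Real.log (Real.sqrt q))).2 hu
  have hexp : Real.exp (Real.log (Real.sqrt q)) = Real.sqrt q := Real.exp_log hs
  rw [Real.sinh_eq] at hsinh
  have h2 : Real.exp (-(-Real.log (Real.sqrt q))) = Real.sqrt q := by
    rw [neg_neg]; exact hexp
  rw [h2, Real.exp_neg, hexp] at hsinh
  have hq : Real.sqrt q * Real.sqrt q = q := Real.mul_self_sqrt h0.le
  have hlq : Real.log q = 2 * Real.log (Real.sqrt q) := by
    have h3 := Real.log_mul hs.ne' hs.ne'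
    rw [hq] at h3; linarith
  have hinv : (Real.sqrt q)⁻¹ * Real.sqrt q = 1 := inv_mul_cancel₀ hs.ne'
  rw [hlq, le_div_iff₀ hs]
  nlinarith [hsinh, hq, hs, hinv]

set_option maxHeartbeats 1000000 in
lemma lnB (z : ℝ) (h0 : 0 ≤ z) (h1 : z ≤ 1/2) :
    z^2 ≤ (1+z) * Real.log (1+z) + (1-z) * Real.log (1-z) := by
  have habs : |z| < 1 := by rw [abs_of_nonneg h0]; linarith
  have habs' : |(-z)| < 1 := by rw [abs_neg]; exact habs
  have hA := Real.abs_log_sub_add_sum_range_le habs 9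
  have hB := Real.abs_log_sub_add_sum_range_le habs' 9
  rw [abs_of_nonneg h0] at hA
  rw [abs_neg, abs_of_nonneg h0] at hB
  simp only [Finset.sum_range_succ, Finset.sum_range_zero] at hA hB
  norm_num at hA hB
  rw [abs_le] at hA hB
  have h1z : (0:ℝ) < 1 - z := by linarith
  have hden : z ^ 10 / (1 - z) ≤ 2 * z ^ 10 := by
    rw [div_le_iff₀ h1z]
    nlinarith [pow_nonneg h0 10]
  have hlogA : -(z + z^2/2 + z^3/3 + z^4/4 + z^5/5 + z^6/6 + z^7/7 + z^8/8 + z^9/9) - 2*z^10 ≤ Real.log (1 - z) := by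
    nlinarith [hA.1, hA.2, hden]
  have hlogB : (z - z^2/2 + z^3/3 - z^4/4 + z^5/5 - z^6/6 + z^7/7 - z^8/8 + z^9/9) - 2*z^10 ≤ Real.log (1 + z) := by
    nlinarith [hB.1, hB.2, hden]
  have e1 : (0:ℝ) ≤ 1 + z := by linarith
  have e2 : (0:ℝ) ≤ 1 - z := by linarith
  have t1 := mul_le_mul_of_nonneg_left hlogB e1
  have t2 := mul_le_mul_of_nonneg_left hlogA e2
  have hz6 : z^6 ≤ 1/64 := by
    have := pow_le_pow_left₀ h0 h1 6
    norm_num at this; linarith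
  have h10 : z^10 ≤ z^4 / 64 := by
    have := mul_le_mul_of_nonneg_left hz6 (pow_nonneg h0 4)
    have hz : z^4 * z^6 = z^10 := by ring
    rw [hz] at this; linarith
  have key0 : (0:ℝ) ≤ z^4/6 + z^6/15 + z^8/28 - (34/9) * z^10 := by
    have h6 := pow_nonneg h0 6
    have h8 := pow_nonneg h0 8
    linarith
  have key : z^2 ≤ (1 + z) *
      (z - z ^ 2 / 2 + z ^ 3 / 3 - z ^ 4 / 4 + z ^ 5 / 5 - z ^ 6 / 6 + z ^ 7 / 7 - z ^ 8 / 8 + z ^ 9 / 9 - 2 * z ^ 10)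
      + (1 - z) *
      (-(z + z ^ 2 / 2 + z ^ 3 / 3 + z ^ 4 / 4 + z ^ 5 / 5 + z ^ 6 / 6 + z ^ 7 / 7 + z ^ 8 / 8 + z ^ 9 / 9) - 2 * z ^ 10) := by
    ring_nf
    ring_nf at key0
    linarith
  linarith [t1, t2, key]

/-- The binary entropy function. -/
noncomputable def binEntropy (p : ℝ) : ℝ :=
  p * Real.logb 2 (1 / p) + (1 - p) * Real.logb 2 (1 / (1 - p))

set_option maxHeartbeats 1000000 in
theorem sqrt_gt_entropy_inv (x p : ℝ) (hx0 : 0 < x) (hx1 : x < 1)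
    (hp0 : 0 ≤ p) (hp : p ≤ 1 / 2) (hpx : binEntropy p = x) :
    2 * Real.sqrt (p * (1 - p)) > x := by
  have hlog2 : 0 < Real.log 2 := Real.log_pos (by norm_num)
  have hp0' : 0 < p := by
    rcases eq_or_lt_of_le hp0 with h | h
    · exfalso
      rw [← h] at hpx
      simp [binEntropy] at hpx
      linarith
    · exact h
  have hp2 : p < 1/2 := by
    rcases lt_or_eq_of_le hp with h | h
    · exact h
    · exfalso
      rw [h] at hpx
      norm_num [binEntropy] at hpx
      linarith
  have hq0 : 0 < 1 - p := by linarith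
  have hx2 : x * Real.log 2 = p * (-Real.log p) + (1-p) * (-Real.log (1-p)) := by
    rw [← hpx]
    unfold binEntropy
    rw [Real.logb, Real.logb, one_div, one_div, Real.log_inv, Real.log_inv]
    field_simp
  have hsq : 0 < p * (1-p) := mul_pos hp0' hq0
  have hspos : 0 < Real.sqrt (p * (1-p)) := Real.sqrt_pos.2 hsq
  have main : p * (-Real.log p) + (1-p) * (-Real.log (1-p))
      < 2 * Real.sqrt (p * (1-p)) * Real.log 2 := by
    rcases le_or_gt p (1/4) with hc | hc
    · -- region A : 0 < p ≤ 1/4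
      set s := Real.sqrt p with hs_def
      set c := Real.sqrt (1-p) with hc_def
      have hs0 : 0 < s := Real.sqrt_pos.2 hp0'
      have hc0 : 0 < c := Real.sqrt_pos.2 hq0
      have hss : s * s = p := Real.mul_self_sqrt hp0'.le
      have hcc : c * c = 1 - p := Real.mul_self_sqrt hq0.le
      have hsc : Real.sqrt (p * (1-p)) = s * c := Real.sqrt_mul hp0'.le _
      have hA1 := lnA p hp0' (by linarith)
      have hA2 := lnA (1-p) hq0 (by linarith)
      have hps : p / s = s := by rw [← hss]; field_simp
      have hqc : (1-p) / c = c := by rw [← hcc]; field_simp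
      have hA1' : p * (-Real.log p) ≤ s * (1-p) := by
        calc p * (-Real.log p) ≤ p * ((1-p)/s) := mul_le_mul_of_nonneg_left hA1 hp0'.le
          _ = (1-p) * (p/s) := by ring
          _ = (1-p) * s := by rw [hps]
          _ = s * (1-p) := by ring
      have hA2' : (1-p) * (-Real.log (1-p)) ≤ c * p := by
        have h4 : -Real.log (1-p) ≤ p / c := by
          have h5 : (1 - (1-p)) = p := by ring
          rwa [h5] at hA2
        calc (1-p) * (-Real.log (1-p)) ≤ (1-p) * (p/c) := mul_le_mul_of_nonneg_left h4 hq0.le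
          _ = p * ((1-p)/c) := by ring
          _ = p * c := by rw [hqc]
          _ = c * p := by ring
      have hs12 : s ≤ 1/2 := by nlinarith [hss, hs0]
      have hcb : c ≤ 1 - s*s/2 := by nlinarith [hcc, hc0, hss]
      have hsum : s + c ≤ 11/8 := by nlinarith [hcb, mul_nonneg (by linarith : (0:ℝ) ≤ 1/2 - s) (by linarith : (0:ℝ) ≤ 3/2 - s)]
      have hlg : (11/8 : ℝ) < 2 * Real.log 2 := by
        have := Real.log_two_gt_d9; linarith
      rw [hsc]
      calc p * (-Real.log p) + (1-p) * (-Real.log (1-p))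
          ≤ s * (1-p) + c * p := by linarith
        _ = s * (c*c) + c * (s*s) := by rw [← hcc, ← hss]
        _ = s * c * (s + c) := by ring
        _ < s * c * (2 * Real.log 2) := by
            apply mul_lt_mul_of_pos_left _ (mul_pos hs0 hc0)
            linarith
        _ = 2 * (s*c) * Real.log 2 := by ring
    · -- region B : 1/4 < p < 1/2
      set z := 1 - 2*p with hz_def
      have hz0 : 0 < z := by simp only [hz_def]; linarith
      have hz1 : z ≤ 1/2 := by simp only [hz_def]; linarith
      have hB := lnB z hz0.le hz1
      have e1 : 1 + z = 2 * (1 - p) := by simp only [hz_def]; ring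
      have e2 : 1 - z = 2 * p := by simp only [hz_def]; ring
      rw [e1, e2, Real.log_mul (by norm_num) hq0.ne',
        Real.log_mul (by norm_num) hp0'.ne'] at hB
      have hBe : p * (-Real.log p) + (1-p) * (-Real.log (1-p)) ≤ Real.log 2 - z^2/2 := by
        nlinarith [hB]
      set w := 2 * Real.sqrt (p * (1-p)) with hw_def
      have hw0 : 0 < w := by positivity
      have hw2 : w * w = 1 - z^2 := by
        have : Real.sqrt (p*(1-p)) * Real.sqrt (p*(1-p)) = p*(1-p) := Real.mul_self_sqrt hsq.le
        simp only [hw_def]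
        nlinarith [this]
      have hw86 : (0.86 : ℝ) ≤ w := by nlinarith [hw2, hw0]
      have hw1 : w < 1 := by nlinarith [hw2, hz0, hw0]
      have hl : Real.log 2 < (1 + w)/2 := by
        have := Real.log_two_lt_d9; linarith
      have hprod : 0 < (1 - w) * ((1 + w)/2 - Real.log 2) :=
        mul_pos (by linarith) (by linarith)
      nlinarith [hprod, hw2, hBe]
  have : x * Real.log 2 < 2 * Real.sqrt (p * (1-p)) * Real.log 2 := by
    rw [hx2]; exact main
  exact lt_of_mul_lt_mul_right this hlog2.le
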